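/- Let X be a connected smooth manifold without boundary, M a smooth manifold without boundary, and let a group G act on X with each g ∈ G acting as a diffeomorphism. Let π : X → M be a smooth map satisfying π(g • x) = π(x) for all g ∈ G and x ∈ X. Let ω be a 1-form on M (an assignment to each p ∈ M of a continuous linear map ω_p : T_pM → ℝ) and let f : X → ℝ be a smooth function whose differential equals the pullback of ω, i.e., for all x ∈ X and all tangent vectors v ∈ T_xX one has (mfderiv f x)(v) = ω_{π(x)}((mfderiv π x)(v)). Then for every fixed g ∈ G there exists a constant c ∈ ℝ such that f(g • x) − f(x) = c for all x ∈ X. -/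

import Mathlib

open Manifold

/-- Lemma 2.3 (i): if `f : X → ℝ` is smooth with `df = π*ω` for a `G`-invariant
smooth map `π : X → M` (where `G` acts on the connected manifold `X` by
diffeomorphisms), then for every `g ∈ G` the function `x ↦ f (g • x) - f x`
is constant. -/
theorem additive_of_pullback_oneForm
    {E : Type*} [NormedAddCommGroup E] [NormedSpace ℝ E]
    {H : Type*} [TopologicalSpace H] (I : ModelWithCorners ℝ E H) [I.Boundaryless]
    {E' : Type*} [NormedAddCommGroup E'] [NormedSpace ℝ E']
    {H' : Type*} [TopologicalSpace H'] (J : ModelWithCorners ℝ E' H') [J.Boundaryless]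
    {X : Type*} [TopologicalSpace X] [ChartedSpace H X] [IsManifold I (⊤ : ℕ∞) X]
    [ConnectedSpace X]
    {M : Type*} [TopologicalSpace M] [ChartedSpace H' M] [IsManifold J (⊤ : ℕ∞) M]
    {G : Type*} [Group G] [MulAction G X]
    (hact : ∀ g : G, ContMDiff I I (⊤ : ℕ∞) (fun x : X => g • x))
    (π : X → M) (hπ : ContMDiff I J (⊤ : ℕ∞) π)
    (hinv : ∀ (g : G) (x : X), π (g • x) = π x)
    (ω : (p : M) → TangentSpace J p →L[ℝ] ℝ)
    (f : X → ℝ) (hf : ContMDiff I 𝓘(ℝ) (⊤ : ℕ∞) f)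
    (hdf : ∀ (x : X) (v : TangentSpace I x),
      mfderiv I 𝓘(ℝ) f x v = ω (π x) (mfderiv I J π x v)) :
    ∀ g : G, ∃ c : ℝ, ∀ x : X, f (g • x) - f x = c := by
  intro g
  set σ : X → X := fun x => g • x with hσ
  set h : X → ℝ := fun x => f (σ x) - f x with hh
  have hfd : ∀ x : X, MDifferentiableAt I 𝓘(ℝ) f x := fun x => (hf x).mdifferentiableAt (by simp)
  have hσd : ∀ x : X, MDifferentiableAt I I σ x := fun x => ((hact g) x).mdifferentiableAt (by simp)
  have hπd : ∀ x : X, MDifferentiableAt I J π x := fun x => (hπ x).mdifferentiableAt (by simp)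
  have key : ∀ x : X, mfderiv I 𝓘(ℝ) (f ∘ σ) x = mfderiv I 𝓘(ℝ) f x := by
    intro x
    have h1 : mfderiv I 𝓘(ℝ) (f ∘ σ) x = (mfderiv I 𝓘(ℝ) f (σ x)).comp (mfderiv I I σ x) :=
      mfderiv_comp x (hfd _) (hσd x)
    have h2 : mfderiv I J (π ∘ σ) x = (mfderiv I J π (σ x)).comp (mfderiv I I σ x) :=
      mfderiv_comp x (hπd _) (hσd x)
    have h3 : (π ∘ σ) = π := funext fun y => hinv g y
    rw [h3] at h2
    ext v
    rw [h1]
    simp only [ContinuousLinearMap.coe_comp', Function.comp_apply]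
    rw [hdf (σ x)]
    have h2' : (mfderiv I J π (σ x)) ((mfderiv I I σ x) v)
        = (mfderiv I J (π ∘ σ) x) v := by
      rw [mfderiv_comp x (hπd _) (hσd x)]; rfl
    rw [h2']
    have h4 : ω ((π ∘ σ) x) ((mfderiv I J (π ∘ σ) x) v)
        = ω (π x) ((mfderiv I J π x) v) := by rw [h3]
    exact h4.trans (hdf x v).symm
  have hzero : ∀ x : X, HasMFDerivAt I 𝓘(ℝ) h x 0 := by
    intro x
    have h1 : HasMFDerivAt I 𝓘(ℝ) (f ∘ σ) x (mfderiv I 𝓘(ℝ) (f ∘ σ) x) :=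
      ((hfd (σ x)).comp x (hσd x)).hasMFDerivAt
    rw [key x] at h1
    have h2 : HasMFDerivAt I 𝓘(ℝ) f x (mfderiv I 𝓘(ℝ) f x) := (hfd x).hasMFDerivAt
    have h3 := h1.sub h2
    have h5 : HasMFDerivAt I 𝓘(ℝ) h x (mfderiv I 𝓘(ℝ) f x - mfderiv I 𝓘(ℝ) f x) := h3
    rwa [sub_self] at h5
  have hloc : IsLocallyConstant h := by
    rw [IsLocallyConstant.iff_eventually_eq]
    intro x₀
    set e := extChartAt I x₀ with he
    have ht : IsOpen e.target := isOpen_extChartAt_target x₀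
    obtain ⟨r, hr, hball⟩ := Metric.isOpen_iff.1 ht (e x₀) (mem_extChartAt_target x₀)
    set B := Metric.ball (e x₀) r with hB
    have hmd : ∀ y ∈ B, HasFDerivAt (h ∘ e.symm) (0 : E →L[ℝ] ℝ) y := by
      intro y hy
      have hyt : y ∈ e.target := hball hy
      have h1 : MDifferentiableAt 𝓘(ℝ, E) I e.symm y := by
        have := mdifferentiableWithinAt_extChartAt_symm (x := x₀) hyt
        rwa [I.range_eq_univ, mdifferentiableWithinAt_univ] at this
      have h2 : HasMFDerivAt 𝓘(ℝ, E) 𝓘(ℝ) (h ∘ e.symm) y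
          (((0 : TangentSpace I (e.symm y) →L[ℝ] ℝ)).comp
            (mfderiv 𝓘(ℝ, E) I e.symm y)) :=
        (hzero (e.symm y)).comp y h1.hasMFDerivAt
      rw [ContinuousLinearMap.zero_comp] at h2
      exact hasMFDerivAt_iff_hasFDerivAt.1 h2
    have hdiff : DifferentiableOn ℝ (h ∘ e.symm) B := fun y hy =>
      ((hmd y hy).differentiableAt).differentiableWithinAt
    have hfd0 : ∀ y ∈ B, fderivWithin ℝ (h ∘ e.symm) B y = 0 := fun y hy => by
      rw [fderivWithin_of_isOpen Metric.isOpen_ball hy, (hmd y hy).fderiv]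
    have hconst : ∀ y ∈ B, (h ∘ e.symm) y = (h ∘ e.symm) (e x₀) := fun y hy =>
      (convex_ball (e x₀) r).is_const_of_fderivWithin_eq_zero hdiff hfd0 hy
        (Metric.mem_ball_self hr)
    have hU : e ⁻¹' B ∩ e.source ∈ nhds x₀ := by
      refine Filter.inter_mem ?_ (extChartAt_source_mem_nhds x₀)
      exact (continuousAt_extChartAt x₀).preimage_mem_nhds (Metric.ball_mem_nhds _ hr)
    filter_upwards [hU] with y hy
    have h1 : h y = (h ∘ e.symm) (e y) := by
      simp only [Function.comp_apply, e.left_inv hy.2]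
    have h2 : h x₀ = (h ∘ e.symm) (e x₀) := by
      simp only [Function.comp_apply, e.left_inv (mem_extChartAt_source x₀)]
    rw [h1, h2]
    exact hconst _ hy.1
  obtain ⟨x₀⟩ : Nonempty X := inferInstance
  exact ⟨h x₀, fun x => hloc.apply_eq_of_preconnectedSpace x x₀⟩
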